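/- The 2×2 real matrix M = [[3, −4], [4, 3]] has no real eigenvalue, and for every positive integer K the matrix M^K has no rational eigenvalue; consequently no nonzero integer vector (m,n) is an eigenvector of M^K. -/

import Mathlib

open Matrix

private lemma key17 {F : Type*} [Field F] [LinearOrder F] [IsStrictOrderedRing F] (a b μ x y : F) (hb : b ≠ 0)
    (h1 : a * x + (-b) * y = μ * x) (h2 : b * x + a * y = μ * y) :
    x = 0 ∧ y = 0 := by
  have hpos : 0 < b ^ 2 + (a - μ) ^ 2 := by positivity
  constructor
  · have h3 : (b ^ 2 + (a - μ) ^ 2) * x = 0 := by linear_combination b * h2 + (a - μ) * h1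
    exact (mul_eq_zero.1 h3).resolve_left hpos.ne'
  · have h3 : (b ^ 2 + (a - μ) ^ 2) * y = 0 := by linear_combination (a - μ) * h2 - b * h1
    exact (mul_eq_zero.1 h3).resolve_left hpos.ne'

private lemma pow_form17 : ∀ K : ℕ, 1 ≤ K → ∃ a b : ℤ,
    ((!![3, -4; 4, 3] : Matrix (Fin 2) (Fin 2) ℚ)) ^ K =
      !![(a : ℚ), -(b : ℚ); (b : ℚ), (a : ℚ)] ∧ a % 5 = 3 ∧ b % 5 = 4 := by
  intro K hK
  induction K with
  | zero => omega
  | succ n ih =>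
    rcases Nat.eq_zero_or_pos n with h | h
    · subst h
      exact ⟨3, 4, by norm_num, by norm_num, by norm_num⟩
    · obtain ⟨a, b, hM, ha, hb⟩ := ih h
      refine ⟨3 * a - 4 * b, 4 * a + 3 * b, ?_, by omega, by omega⟩
      rw [pow_succ, hM, Matrix.mul_fin_two]
      ext i j
      fin_cases i <;> fin_cases j <;> push_cast <;> ring

theorem stmt17 :
    (¬∃ (μ : ℝ) (v : Fin 2 → ℝ), v ≠ 0 ∧
      (!![3, -4; 4, 3] : Matrix (Fin 2) (Fin 2) ℝ).mulVec v = μ • v) ∧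
    (∀ K : ℕ, 1 ≤ K → ¬∃ (μ : ℚ) (v : Fin 2 → ℚ), v ≠ 0 ∧
      ((!![3, -4; 4, 3] : Matrix (Fin 2) (Fin 2) ℚ) ^ K).mulVec v = μ • v) ∧
    (∀ K : ℕ, 1 ≤ K → ∀ m n : ℤ, ¬(m = 0 ∧ n = 0) →
      ¬∃ μ : ℚ, ((!![3, -4; 4, 3] : Matrix (Fin 2) (Fin 2) ℚ) ^ K).mulVec
        ![(m : ℚ), (n : ℚ)] = μ • ![(m : ℚ), (n : ℚ)]) := by
  have part2 : ∀ K : ℕ, 1 ≤ K → ¬∃ (μ : ℚ) (v : Fin 2 → ℚ), v ≠ 0 ∧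
      ((!![3, -4; 4, 3] : Matrix (Fin 2) (Fin 2) ℚ) ^ K).mulVec v = μ • v := by
    rintro K hK ⟨μ, v, hv, heq⟩
    obtain ⟨a, b, hM, ha, hb⟩ := pow_form17 K hK
    rw [hM] at heq
    have h0 := congrFun heq 0
    have h1 := congrFun heq 1
    simp [Matrix.mulVec, dotProduct, Fin.sum_univ_two] at h0 h1
    have hbne : (b : ℚ) ≠ 0 := by
      have : b ≠ 0 := by omega
      exact_mod_cast this
    have h0' : (a : ℚ) * v 0 + (-(b : ℚ)) * v 1 = μ * v 0 := by linarith
    have h1' : (b : ℚ) * v 0 + (a : ℚ) * v 1 = μ * v 1 := by linarith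
    obtain ⟨hx, hy⟩ := key17 (a : ℚ) (b : ℚ) μ (v 0) (v 1) hbne h0' h1'
    apply hv
    funext i
    fin_cases i <;> simpa
  refine ⟨?_, part2, ?_⟩
  · rintro ⟨μ, v, hv, heq⟩
    have h0 := congrFun heq 0
    have h1 := congrFun heq 1
    simp [Matrix.mulVec, dotProduct, Fin.sum_univ_two] at h0 h1
    have h0' : (3 : ℝ) * v 0 + (-4) * v 1 = μ * v 0 := by linarith
    have h1' : (4 : ℝ) * v 0 + 3 * v 1 = μ * v 1 := by linarith
    obtain ⟨hx, hy⟩ := key17 (3 : ℝ) 4 μ (v 0) (v 1) (by norm_num) h0' h1'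
    apply hv
    funext i
    fin_cases i <;> simpa
  · rintro K hK m n hmn ⟨μ, heq⟩
    apply part2 K hK
    refine ⟨μ, ![(m : ℚ), (n : ℚ)], ?_, heq⟩
    intro h0
    apply hmn
    constructor
    · have := congrFun h0 0
      simpa using this
    · have := congrFun h0 1
      simpa using this
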